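/- Assume ρ < 1 and let w be a stationary distribution of the original chain. Then for all x, y ∈ ℂ with 0 < |x| ≤ 1 and 0 < |y| ≤ 1: T(x,y)·Σ_{i<j} w_{i,j} x^i y^j + T(y,x)·Σ_{i>j} w_{i,j} x^i y^j + F(x,y)·Σ_{i≥0} w_{i,i} (xy)^i + C(x,y)·Σ_{i≥0} w_{i,0} x^i + C(y,x)·Σ_{j≥0} w_{0,j} y^j = w_{0,0}·L(x,y). -/

import Mathlib

/-- One-step transition probabilities of the original chain. -/
noncomputable def Pker (a lam : ℝ) : ℕ × ℕ → ℕ × ℕ → ℝ := fun s t =>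
  let i := s.1; let j := s.2
  if j < i ∧ 0 < j then
    (if t = (i, j+1) then lam*((1-a)^2+a^2) else 0)
    + (if t = (i, j-1) then (1-lam)*a*(1-a) else 0)
    + (if t = (i-1, j) then (1-lam)*a*(1-a) else 0)
    + (if t = (i-1, j+1) then lam*a*(1-a) else 0)
    + (if t = (i, j) then (1-lam)*((1-a)^2+a^2) + lam*a*(1-a) else 0)
  else if i < j ∧ 0 < i then
    (if t = (i+1, j) then lam*((1-a)^2+a^2) else 0)
    + (if t = (i, j-1) then (1-lam)*a*(1-a) else 0)
    + (if t = (i-1, j) then (1-lam)*a*(1-a) else 0)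
    + (if t = (i+1, j-1) then lam*a*(1-a) else 0)
    + (if t = (i, j) then (1-lam)*((1-a)^2+a^2) + lam*a*(1-a) else 0)
  else if 0 < i ∧ j = 0 then
    (if t = (i, 1) then lam*((1-a)^2+a^2) else 0)
    + (if t = (i-1, 0) then (1-lam)*a else 0)
    + (if t = (i-1, 1) then lam*a*(1-a) else 0)
    + (if t = (i, 0) then (1-lam)*(1-a) + lam*a*(1-a) else 0)
  else if 0 < j ∧ i = 0 then
    (if t = (1, j) then lam*((1-a)^2+a^2) else 0)
    + (if t = (0, j-1) then (1-lam)*a else 0)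
    + (if t = (1, j-1) then lam*a*(1-a) else 0)
    + (if t = (0, j) then (1-lam)*(1-a) + lam*a*(1-a) else 0)
  else if 0 < i then
    (if t = (i+1, i) then lam/2*((1-a)^2+a^2) else 0)
    + (if t = (i, i+1) then lam/2*((1-a)^2+a^2) else 0)
    + (if t = (i-1, i) then (1-lam)*(1-a)*a else 0)
    + (if t = (i, i-1) then (1-lam)*(1-a)*a else 0)
    + (if t = (i+1, i-1) then lam/2*(1-a)*a else 0)
    + (if t = (i-1, i+1) then lam/2*(1-a)*a else 0)
    + (if t = (i, i) then (1-lam)*((1-a)^2+a^2) + lam*a*(1-a) else 0)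
  else
    (if t = (1, 0) then lam/2*(1-a) else 0)
    + (if t = (0, 1) then lam/2*(1-a) else 0)
    + (if t = (0, 0) then (1-lam) + lam*a else 0)


/-- The load ρ = λ(ā²+a²)/(2λ̄āa). -/
noncomputable def rhoLoad (a lam : ℝ) : ℝ :=
  lam * ((1-a)^2 + a^2) / (2 * (1-lam) * (1-a) * a)

/-- A stationary distribution of the original chain. -/
def IsStationaryO (a lam : ℝ) (w : ℕ → ℕ → ℝ) : Prop :=
  (∀ i j, 0 ≤ w i j) ∧ Summable (fun p : ℕ × ℕ => w p.1 p.2) ∧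
  (∑' p : ℕ × ℕ, w p.1 p.2) = 1 ∧
  ∀ p : ℕ × ℕ, w p.1 p.2 = ∑' q : ℕ × ℕ, w q.1 q.2 * Pker a lam q p

/-- T(x,y) = λ(ā²+a²)(1−x) + λ̄āa(2−1/x−1/y) + λāa(1−x/y). -/
noncomputable def Tfun (a lam : ℝ) (x y : ℂ) : ℂ :=
  (lam:ℂ)*((1-(a:ℂ))^2+(a:ℂ)^2)*(1-x)
  + (1-(lam:ℂ))*(1-(a:ℂ))*(a:ℂ)*(2 - 1/x - 1/y)
  + (lam:ℂ)*(1-(a:ℂ))*(a:ℂ)*(1 - x/y)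

/-- F(x,y) = (λ/2)(2−x−y)(ā²+a²) + λ̄āa(2−1/x−1/y) + (λ/2)āa(2−y/x−x/y). -/
noncomputable def Ffun (a lam : ℝ) (x y : ℂ) : ℂ :=
  (lam:ℂ)/2*(2-x-y)*((1-(a:ℂ))^2+(a:ℂ)^2)
  + (1-(lam:ℂ))*(1-(a:ℂ))*(a:ℂ)*(2 - 1/x - 1/y)
  + (lam:ℂ)/2*(1-(a:ℂ))*(a:ℂ)*(2 - y/x - x/y)

/-- C(x,y) = λ̄a[a(1−1/x) − ā(1−1/y)]. -/
noncomputable def Cfun (a lam : ℝ) (x y : ℂ) : ℂ :=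
  (1-(lam:ℂ))*(a:ℂ)*((a:ℂ)*(1 - 1/x) - (1-(a:ℂ))*(1 - 1/y))

/-- L(x,y) = (λ/2)a(a−ā)(2−x−y) + λ̄a²(2−1/x−1/y) + (λ/2)aā(2−x/y−y/x). -/
noncomputable def Lfun (a lam : ℝ) (x y : ℂ) : ℂ :=
  (lam:ℂ)/2*(a:ℂ)*((a:ℂ)-(1-(a:ℂ)))*(2-x-y)
  + (1-(lam:ℂ))*(a:ℂ)^2*(2 - 1/x - 1/y)
  + (lam:ℂ)/2*(a:ℂ)*(1-(a:ℂ))*(2 - x/y - y/x)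

set_option maxHeartbeats 1000000

/-- Generating-function value of one row of the kernel. -/
noncomputable def Erow (a lam : ℝ) (x y : ℂ) : ℕ × ℕ → ℂ := fun s =>
  let i := s.1; let j := s.2
  if j < i ∧ 0 < j then
    ((lam*((1-a)^2+a^2) : ℝ) : ℂ) * x ^ i * y ^ (j+1)
    + (((1-lam)*a*(1-a) : ℝ) : ℂ) * x ^ i * y ^ (j-1)
    + (((1-lam)*a*(1-a) : ℝ) : ℂ) * x ^ (i-1) * y ^ j
    + ((lam*a*(1-a) : ℝ) : ℂ) * x ^ (i-1) * y ^ (j+1)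
    + (((1-lam)*((1-a)^2+a^2) + lam*a*(1-a) : ℝ) : ℂ) * x ^ i * y ^ j
  else if i < j ∧ 0 < i then
    ((lam*((1-a)^2+a^2) : ℝ) : ℂ) * x ^ (i+1) * y ^ j
    + (((1-lam)*a*(1-a) : ℝ) : ℂ) * x ^ i * y ^ (j-1)
    + (((1-lam)*a*(1-a) : ℝ) : ℂ) * x ^ (i-1) * y ^ j
    + ((lam*a*(1-a) : ℝ) : ℂ) * x ^ (i+1) * y ^ (j-1)
    + (((1-lam)*((1-a)^2+a^2) + lam*a*(1-a) : ℝ) : ℂ) * x ^ i * y ^ j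
  else if 0 < i ∧ j = 0 then
    ((lam*((1-a)^2+a^2) : ℝ) : ℂ) * x ^ i * y ^ 1
    + (((1-lam)*a : ℝ) : ℂ) * x ^ (i-1) * y ^ 0
    + ((lam*a*(1-a) : ℝ) : ℂ) * x ^ (i-1) * y ^ 1
    + (((1-lam)*(1-a) + lam*a*(1-a) : ℝ) : ℂ) * x ^ i * y ^ 0
  else if 0 < j ∧ i = 0 then
    ((lam*((1-a)^2+a^2) : ℝ) : ℂ) * x ^ 1 * y ^ j
    + (((1-lam)*a : ℝ) : ℂ) * x ^ 0 * y ^ (j-1)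
    + ((lam*a*(1-a) : ℝ) : ℂ) * x ^ 1 * y ^ (j-1)
    + (((1-lam)*(1-a) + lam*a*(1-a) : ℝ) : ℂ) * x ^ 0 * y ^ j
  else if 0 < i then
    ((lam/2*((1-a)^2+a^2) : ℝ) : ℂ) * x ^ (i+1) * y ^ i
    + ((lam/2*((1-a)^2+a^2) : ℝ) : ℂ) * x ^ i * y ^ (i+1)
    + (((1-lam)*(1-a)*a : ℝ) : ℂ) * x ^ (i-1) * y ^ i
    + (((1-lam)*(1-a)*a : ℝ) : ℂ) * x ^ i * y ^ (i-1)
    + ((lam/2*(1-a)*a : ℝ) : ℂ) * x ^ (i+1) * y ^ (i-1)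
    + ((lam/2*(1-a)*a : ℝ) : ℂ) * x ^ (i-1) * y ^ (i+1)
    + (((1-lam)*((1-a)^2+a^2) + lam*a*(1-a) : ℝ) : ℂ) * x ^ i * y ^ i
  else
    ((lam/2*(1-a) : ℝ) : ℂ) * x ^ 1 * y ^ 0
    + ((lam/2*(1-a) : ℝ) : ℂ) * x ^ 0 * y ^ 1
    + (((1-lam) + lam*a : ℝ) : ℂ) * x ^ 0 * y ^ 0

lemma hasSum_termC (x y : ℂ) (t : ℕ × ℕ) (c : ℂ) :
    HasSum (fun p : ℕ × ℕ => (if p = t then c else 0) * x ^ p.1 * y ^ p.2)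
      (c * x ^ t.1 * y ^ t.2) := by
  have h : (fun p : ℕ × ℕ => (if p = t then c else 0) * x ^ p.1 * y ^ p.2)
      = fun p => if p = t then c * x ^ t.1 * y ^ t.2 else 0 := by
    funext p
    by_cases h : p = t
    · subst h; simp
    · simp [h]
  rw [h]
  exact hasSum_ite_eq t _

lemma hasSum_rowR (a lam : ℝ) (q : ℕ × ℕ) :
    HasSum (fun p : ℕ × ℕ => Pker a lam q p) 1 := by
  obtain ⟨i, j⟩ := q
  by_cases h1 : j < i ∧ 0 < j
  · have hfun : (fun p : ℕ × ℕ => Pker a lam (i,j) p) = fun p =>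
        (if p = (i, j+1) then lam*((1-a)^2+a^2) else 0)
        + (if p = (i, j-1) then (1-lam)*a*(1-a) else 0)
        + (if p = (i-1, j) then (1-lam)*a*(1-a) else 0)
        + (if p = (i-1, j+1) then lam*a*(1-a) else 0)
        + (if p = (i, j) then (1-lam)*((1-a)^2+a^2) + lam*a*(1-a) else 0) := by
      funext p; simp only [Pker]; rw [if_pos h1]
    rw [hfun]
    have hval : (lam*((1-a)^2+a^2)) + ((1-lam)*a*(1-a)) + ((1-lam)*a*(1-a)) + (lam*a*(1-a)) + ((1-lam)*((1-a)^2+a^2) + lam*a*(1-a)) = 1 := by ring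
    have H := ((((hasSum_ite_eq ((i, j+1) : ℕ × ℕ) (lam*((1-a)^2+a^2))).add
      (hasSum_ite_eq ((i, j-1) : ℕ × ℕ) ((1-lam)*a*(1-a)))).add
      (hasSum_ite_eq ((i-1, j) : ℕ × ℕ) ((1-lam)*a*(1-a)))).add
      (hasSum_ite_eq ((i-1, j+1) : ℕ × ℕ) (lam*a*(1-a)))).add
      (hasSum_ite_eq ((i, j) : ℕ × ℕ) ((1-lam)*((1-a)^2+a^2) + lam*a*(1-a)))
    simpa only [hval] using H
  by_cases h2 : i < j ∧ 0 < i
  · have hfun : (fun p : ℕ × ℕ => Pker a lam (i,j) p) = fun p =>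
        (if p = (i+1, j) then lam*((1-a)^2+a^2) else 0)
        + (if p = (i, j-1) then (1-lam)*a*(1-a) else 0)
        + (if p = (i-1, j) then (1-lam)*a*(1-a) else 0)
        + (if p = (i+1, j-1) then lam*a*(1-a) else 0)
        + (if p = (i, j) then (1-lam)*((1-a)^2+a^2) + lam*a*(1-a) else 0) := by
      funext p; simp only [Pker]; rw [if_neg h1, if_pos h2]
    rw [hfun]
    have hval : (lam*((1-a)^2+a^2)) + ((1-lam)*a*(1-a)) + ((1-lam)*a*(1-a)) + (lam*a*(1-a)) + ((1-lam)*((1-a)^2+a^2) + lam*a*(1-a)) = 1 := by ring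
    have H := ((((hasSum_ite_eq ((i+1, j) : ℕ × ℕ) (lam*((1-a)^2+a^2))).add
      (hasSum_ite_eq ((i, j-1) : ℕ × ℕ) ((1-lam)*a*(1-a)))).add
      (hasSum_ite_eq ((i-1, j) : ℕ × ℕ) ((1-lam)*a*(1-a)))).add
      (hasSum_ite_eq ((i+1, j-1) : ℕ × ℕ) (lam*a*(1-a)))).add
      (hasSum_ite_eq ((i, j) : ℕ × ℕ) ((1-lam)*((1-a)^2+a^2) + lam*a*(1-a)))
    simpa only [hval] using H
  by_cases h3 : 0 < i ∧ j = 0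
  · have hfun : (fun p : ℕ × ℕ => Pker a lam (i,j) p) = fun p =>
        (if p = (i, 1) then lam*((1-a)^2+a^2) else 0)
        + (if p = (i-1, 0) then (1-lam)*a else 0)
        + (if p = (i-1, 1) then lam*a*(1-a) else 0)
        + (if p = (i, 0) then (1-lam)*(1-a) + lam*a*(1-a) else 0) := by
      funext p; simp only [Pker]; rw [if_neg h1, if_neg h2, if_pos h3]
    rw [hfun]
    have hval : (lam*((1-a)^2+a^2)) + ((1-lam)*a) + (lam*a*(1-a)) + ((1-lam)*(1-a) + lam*a*(1-a)) = 1 := by ring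
    have H := (((hasSum_ite_eq ((i, 1) : ℕ × ℕ) (lam*((1-a)^2+a^2))).add
      (hasSum_ite_eq ((i-1, 0) : ℕ × ℕ) ((1-lam)*a))).add
      (hasSum_ite_eq ((i-1, 1) : ℕ × ℕ) (lam*a*(1-a)))).add
      (hasSum_ite_eq ((i, 0) : ℕ × ℕ) ((1-lam)*(1-a) + lam*a*(1-a)))
    simpa only [hval] using H
  by_cases h4 : 0 < j ∧ i = 0
  · have hfun : (fun p : ℕ × ℕ => Pker a lam (i,j) p) = fun p =>
        (if p = (1, j) then lam*((1-a)^2+a^2) else 0)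
        + (if p = (0, j-1) then (1-lam)*a else 0)
        + (if p = (1, j-1) then lam*a*(1-a) else 0)
        + (if p = (0, j) then (1-lam)*(1-a) + lam*a*(1-a) else 0) := by
      funext p; simp only [Pker]; rw [if_neg h1, if_neg h2, if_neg h3, if_pos h4]
    rw [hfun]
    have hval : (lam*((1-a)^2+a^2)) + ((1-lam)*a) + (lam*a*(1-a)) + ((1-lam)*(1-a) + lam*a*(1-a)) = 1 := by ring
    have H := (((hasSum_ite_eq ((1, j) : ℕ × ℕ) (lam*((1-a)^2+a^2))).add
      (hasSum_ite_eq ((0, j-1) : ℕ × ℕ) ((1-lam)*a))).add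
      (hasSum_ite_eq ((1, j-1) : ℕ × ℕ) (lam*a*(1-a)))).add
      (hasSum_ite_eq ((0, j) : ℕ × ℕ) ((1-lam)*(1-a) + lam*a*(1-a)))
    simpa only [hval] using H
  by_cases h5 : 0 < i
  · have hfun : (fun p : ℕ × ℕ => Pker a lam (i,j) p) = fun p =>
        (if p = (i+1, i) then lam/2*((1-a)^2+a^2) else 0)
        + (if p = (i, i+1) then lam/2*((1-a)^2+a^2) else 0)
        + (if p = (i-1, i) then (1-lam)*(1-a)*a else 0)
        + (if p = (i, i-1) then (1-lam)*(1-a)*a else 0)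
        + (if p = (i+1, i-1) then lam/2*(1-a)*a else 0)
        + (if p = (i-1, i+1) then lam/2*(1-a)*a else 0)
        + (if p = (i, i) then (1-lam)*((1-a)^2+a^2) + lam*a*(1-a) else 0) := by
      funext p; simp only [Pker]; rw [if_neg h1, if_neg h2, if_neg h3, if_neg h4, if_pos h5]
    rw [hfun]
    have hval : (lam/2*((1-a)^2+a^2)) + (lam/2*((1-a)^2+a^2)) + ((1-lam)*(1-a)*a) + ((1-lam)*(1-a)*a) + (lam/2*(1-a)*a) + (lam/2*(1-a)*a) + ((1-lam)*((1-a)^2+a^2) + lam*a*(1-a)) = 1 := by ring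
    have H := ((((((hasSum_ite_eq ((i+1, i) : ℕ × ℕ) (lam/2*((1-a)^2+a^2))).add
      (hasSum_ite_eq ((i, i+1) : ℕ × ℕ) (lam/2*((1-a)^2+a^2)))).add
      (hasSum_ite_eq ((i-1, i) : ℕ × ℕ) ((1-lam)*(1-a)*a))).add
      (hasSum_ite_eq ((i, i-1) : ℕ × ℕ) ((1-lam)*(1-a)*a))).add
      (hasSum_ite_eq ((i+1, i-1) : ℕ × ℕ) (lam/2*(1-a)*a))).add
      (hasSum_ite_eq ((i-1, i+1) : ℕ × ℕ) (lam/2*(1-a)*a))).add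
      (hasSum_ite_eq ((i, i) : ℕ × ℕ) ((1-lam)*((1-a)^2+a^2) + lam*a*(1-a)))
    simpa only [hval] using H
  · have hfun : (fun p : ℕ × ℕ => Pker a lam (i,j) p) = fun p =>
        (if p = (1, 0) then lam/2*(1-a) else 0)
        + (if p = (0, 1) then lam/2*(1-a) else 0)
        + (if p = (0, 0) then (1-lam) + lam*a else 0) := by
      funext p; simp only [Pker]; rw [if_neg h1, if_neg h2, if_neg h3, if_neg h4, if_neg h5]
    rw [hfun]
    have hval : (lam/2*(1-a)) + (lam/2*(1-a)) + ((1-lam) + lam*a) = 1 := by ring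
    have H := ((hasSum_ite_eq ((1, 0) : ℕ × ℕ) (lam/2*(1-a))).add
      (hasSum_ite_eq ((0, 1) : ℕ × ℕ) (lam/2*(1-a)))).add
      (hasSum_ite_eq ((0, 0) : ℕ × ℕ) ((1-lam) + lam*a))
    simpa only [hval] using H

lemma hasSum_rowC (a lam : ℝ) (x y : ℂ) (q : ℕ × ℕ) :
    HasSum (fun p : ℕ × ℕ => ((Pker a lam q p : ℝ) : ℂ) * x ^ p.1 * y ^ p.2)
      (Erow a lam x y q) := by
  obtain ⟨i, j⟩ := q
  by_cases h1 : j < i ∧ 0 < j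
  · have hfun : (fun p : ℕ × ℕ => ((Pker a lam (i,j) p : ℝ) : ℂ) * x ^ p.1 * y ^ p.2) = fun p =>
        (if p = (i, j+1) then ((lam*((1-a)^2+a^2) : ℝ) : ℂ) else 0) * x ^ p.1 * y ^ p.2
        + (if p = (i, j-1) then (((1-lam)*a*(1-a) : ℝ) : ℂ) else 0) * x ^ p.1 * y ^ p.2
        + (if p = (i-1, j) then (((1-lam)*a*(1-a) : ℝ) : ℂ) else 0) * x ^ p.1 * y ^ p.2
        + (if p = (i-1, j+1) then ((lam*a*(1-a) : ℝ) : ℂ) else 0) * x ^ p.1 * y ^ p.2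
        + (if p = (i, j) then (((1-lam)*((1-a)^2+a^2) + lam*a*(1-a) : ℝ) : ℂ) else 0) * x ^ p.1 * y ^ p.2 := by
      funext p; simp only [Pker]; rw [if_pos h1]
      push_cast [apply_ite (fun r : ℝ => (r : ℂ))]
      ring
    rw [hfun]
    simp only [Erow]; rw [if_pos h1]
    exact ((((hasSum_termC x y (i, j+1) _).add
      (hasSum_termC x y (i, j-1) _)).add
      (hasSum_termC x y (i-1, j) _)).add
      (hasSum_termC x y (i-1, j+1) _)).add
      (hasSum_termC x y (i, j) _)
  by_cases h2 : i < j ∧ 0 < i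
  · have hfun : (fun p : ℕ × ℕ => ((Pker a lam (i,j) p : ℝ) : ℂ) * x ^ p.1 * y ^ p.2) = fun p =>
        (if p = (i+1, j) then ((lam*((1-a)^2+a^2) : ℝ) : ℂ) else 0) * x ^ p.1 * y ^ p.2
        + (if p = (i, j-1) then (((1-lam)*a*(1-a) : ℝ) : ℂ) else 0) * x ^ p.1 * y ^ p.2
        + (if p = (i-1, j) then (((1-lam)*a*(1-a) : ℝ) : ℂ) else 0) * x ^ p.1 * y ^ p.2
        + (if p = (i+1, j-1) then ((lam*a*(1-a) : ℝ) : ℂ) else 0) * x ^ p.1 * y ^ p.2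
        + (if p = (i, j) then (((1-lam)*((1-a)^2+a^2) + lam*a*(1-a) : ℝ) : ℂ) else 0) * x ^ p.1 * y ^ p.2 := by
      funext p; simp only [Pker]; rw [if_neg h1, if_pos h2]
      push_cast [apply_ite (fun r : ℝ => (r : ℂ))]
      ring
    rw [hfun]
    simp only [Erow]; rw [if_neg h1, if_pos h2]
    exact ((((hasSum_termC x y (i+1, j) _).add
      (hasSum_termC x y (i, j-1) _)).add
      (hasSum_termC x y (i-1, j) _)).add
      (hasSum_termC x y (i+1, j-1) _)).add
      (hasSum_termC x y (i, j) _)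
  by_cases h3 : 0 < i ∧ j = 0
  · have hfun : (fun p : ℕ × ℕ => ((Pker a lam (i,j) p : ℝ) : ℂ) * x ^ p.1 * y ^ p.2) = fun p =>
        (if p = (i, 1) then ((lam*((1-a)^2+a^2) : ℝ) : ℂ) else 0) * x ^ p.1 * y ^ p.2
        + (if p = (i-1, 0) then (((1-lam)*a : ℝ) : ℂ) else 0) * x ^ p.1 * y ^ p.2
        + (if p = (i-1, 1) then ((lam*a*(1-a) : ℝ) : ℂ) else 0) * x ^ p.1 * y ^ p.2
        + (if p = (i, 0) then (((1-lam)*(1-a) + lam*a*(1-a) : ℝ) : ℂ) else 0) * x ^ p.1 * y ^ p.2 := by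
      funext p; simp only [Pker]; rw [if_neg h1, if_neg h2, if_pos h3]
      push_cast [apply_ite (fun r : ℝ => (r : ℂ))]
      ring
    rw [hfun]
    simp only [Erow]; rw [if_neg h1, if_neg h2, if_pos h3]
    exact (((hasSum_termC x y (i, 1) _).add
      (hasSum_termC x y (i-1, 0) _)).add
      (hasSum_termC x y (i-1, 1) _)).add
      (hasSum_termC x y (i, 0) _)
  by_cases h4 : 0 < j ∧ i = 0
  · have hfun : (fun p : ℕ × ℕ => ((Pker a lam (i,j) p : ℝ) : ℂ) * x ^ p.1 * y ^ p.2) = fun p =>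
        (if p = (1, j) then ((lam*((1-a)^2+a^2) : ℝ) : ℂ) else 0) * x ^ p.1 * y ^ p.2
        + (if p = (0, j-1) then (((1-lam)*a : ℝ) : ℂ) else 0) * x ^ p.1 * y ^ p.2
        + (if p = (1, j-1) then ((lam*a*(1-a) : ℝ) : ℂ) else 0) * x ^ p.1 * y ^ p.2
        + (if p = (0, j) then (((1-lam)*(1-a) + lam*a*(1-a) : ℝ) : ℂ) else 0) * x ^ p.1 * y ^ p.2 := by
      funext p; simp only [Pker]; rw [if_neg h1, if_neg h2, if_neg h3, if_pos h4]
      push_cast [apply_ite (fun r : ℝ => (r : ℂ))]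
      ring
    rw [hfun]
    simp only [Erow]; rw [if_neg h1, if_neg h2, if_neg h3, if_pos h4]
    exact (((hasSum_termC x y (1, j) _).add
      (hasSum_termC x y (0, j-1) _)).add
      (hasSum_termC x y (1, j-1) _)).add
      (hasSum_termC x y (0, j) _)
  by_cases h5 : 0 < i
  · have hfun : (fun p : ℕ × ℕ => ((Pker a lam (i,j) p : ℝ) : ℂ) * x ^ p.1 * y ^ p.2) = fun p =>
        (if p = (i+1, i) then ((lam/2*((1-a)^2+a^2) : ℝ) : ℂ) else 0) * x ^ p.1 * y ^ p.2
        + (if p = (i, i+1) then ((lam/2*((1-a)^2+a^2) : ℝ) : ℂ) else 0) * x ^ p.1 * y ^ p.2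
        + (if p = (i-1, i) then (((1-lam)*(1-a)*a : ℝ) : ℂ) else 0) * x ^ p.1 * y ^ p.2
        + (if p = (i, i-1) then (((1-lam)*(1-a)*a : ℝ) : ℂ) else 0) * x ^ p.1 * y ^ p.2
        + (if p = (i+1, i-1) then ((lam/2*(1-a)*a : ℝ) : ℂ) else 0) * x ^ p.1 * y ^ p.2
        + (if p = (i-1, i+1) then ((lam/2*(1-a)*a : ℝ) : ℂ) else 0) * x ^ p.1 * y ^ p.2
        + (if p = (i, i) then (((1-lam)*((1-a)^2+a^2) + lam*a*(1-a) : ℝ) : ℂ) else 0) * x ^ p.1 * y ^ p.2 := by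
      funext p; simp only [Pker]; rw [if_neg h1, if_neg h2, if_neg h3, if_neg h4, if_pos h5]
      push_cast [apply_ite (fun r : ℝ => (r : ℂ))]
      ring
    rw [hfun]
    simp only [Erow]; rw [if_neg h1, if_neg h2, if_neg h3, if_neg h4, if_pos h5]
    exact ((((((hasSum_termC x y (i+1, i) _).add
      (hasSum_termC x y (i, i+1) _)).add
      (hasSum_termC x y (i-1, i) _)).add
      (hasSum_termC x y (i, i-1) _)).add
      (hasSum_termC x y (i+1, i-1) _)).add
      (hasSum_termC x y (i-1, i+1) _)).add
      (hasSum_termC x y (i, i) _)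
  · have hfun : (fun p : ℕ × ℕ => ((Pker a lam (i,j) p : ℝ) : ℂ) * x ^ p.1 * y ^ p.2) = fun p =>
        (if p = (1, 0) then ((lam/2*(1-a) : ℝ) : ℂ) else 0) * x ^ p.1 * y ^ p.2
        + (if p = (0, 1) then ((lam/2*(1-a) : ℝ) : ℂ) else 0) * x ^ p.1 * y ^ p.2
        + (if p = (0, 0) then (((1-lam) + lam*a : ℝ) : ℂ) else 0) * x ^ p.1 * y ^ p.2 := by
      funext p; simp only [Pker]; rw [if_neg h1, if_neg h2, if_neg h3, if_neg h4, if_neg h5]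
      push_cast [apply_ite (fun r : ℝ => (r : ℂ))]
      ring
    rw [hfun]
    simp only [Erow]; rw [if_neg h1, if_neg h2, if_neg h3, if_neg h4, if_neg h5]
    exact ((hasSum_termC x y (1, 0) _).add
      (hasSum_termC x y (0, 1) _)).add
      (hasSum_termC x y (0, 0) _)

lemma ite_nn {c : Prop} [Decidable c] {u v : ℝ} (hu : 0 ≤ u) (hv : 0 ≤ v) :
    0 ≤ if c then u else v := by split_ifs <;> assumption

lemma summable_ind {f : ℕ × ℕ → ℂ} (hf : Summable f) (c : ℕ × ℕ → Prop) [DecidablePred c] :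
    Summable fun q => if c q then f q else 0 := by
  apply Summable.of_norm_bounded hf.norm
  intro q; split_ifs <;> simp

lemma Pker_nonneg (a lam : ℝ) (ha0 : 0 ≤ a) (ha1 : a ≤ 1) (hl0 : 0 ≤ lam) (hl1 : lam ≤ 1)
    (q p : ℕ × ℕ) : 0 ≤ Pker a lam q p := by
  obtain ⟨i, j⟩ := q
  have h0 : (0:ℝ) ≤ 1 - a := by linarith
  have h0' : (0:ℝ) ≤ 1 - lam := by linarith
  have hA : (0:ℝ) ≤ (1-a)^2 + a^2 := by positivity
  simp only [Pker]
  refine ite_nn ?_ (ite_nn ?_ (ite_nn ?_ (ite_nn ?_ (ite_nn ?_ ?_)))) <;>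
    (repeat' apply add_nonneg) <;>
    refine ite_nn ?_ le_rfl <;>
    nlinarith [mul_nonneg ha0 h0, mul_nonneg hl0 h0', mul_nonneg (mul_nonneg h0' ha0) h0,
      mul_nonneg (mul_nonneg hl0 ha0) h0, mul_nonneg hl0 hA, mul_nonneg h0' hA,
      mul_nonneg h0' h0, mul_nonneg h0' ha0, mul_nonneg hl0 ha0, mul_nonneg hl0 h0]

lemma Sid1 (a lam : ℝ) (x y : ℂ) (hx : x ≠ 0) (hy : y ≠ 0) :
    Tfun a lam x y * (x*y) = x*y -
      ((lam:ℂ)*((1-(a:ℂ))^2+(a:ℂ)^2)*(x^2*y) + (1-(lam:ℂ))*(a:ℂ)*(1-(a:ℂ))*x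
       + (1-(lam:ℂ))*(a:ℂ)*(1-(a:ℂ))*y + (lam:ℂ)*(a:ℂ)*(1-(a:ℂ))*x^2
       + ((1-(lam:ℂ))*((1-(a:ℂ))^2+(a:ℂ)^2)+(lam:ℂ)*(a:ℂ)*(1-(a:ℂ)))*(x*y)) := by
  simp only [Tfun]; field_simp; ring

lemma Sid1' (a lam : ℝ) (x y : ℂ) (hx : x ≠ 0) (hy : y ≠ 0) :
    Tfun a lam y x * (x*y) = x*y -
      ((lam:ℂ)*((1-(a:ℂ))^2+(a:ℂ)^2)*(x*y^2) + (1-(lam:ℂ))*(a:ℂ)*(1-(a:ℂ))*x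
       + (1-(lam:ℂ))*(a:ℂ)*(1-(a:ℂ))*y + (lam:ℂ)*(a:ℂ)*(1-(a:ℂ))*y^2
       + ((1-(lam:ℂ))*((1-(a:ℂ))^2+(a:ℂ)^2)+(lam:ℂ)*(a:ℂ)*(1-(a:ℂ)))*(x*y)) := by
  simp only [Tfun]; field_simp; ring

lemma Sid2 (a lam : ℝ) (x y : ℂ) (hx : x ≠ 0) (hy : y ≠ 0) :
    (Tfun a lam x y + Cfun a lam y x) * y = y -
      ((lam:ℂ)*((1-(a:ℂ))^2+(a:ℂ)^2)*(x*y) + (1-(lam:ℂ))*(a:ℂ)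
       + (lam:ℂ)*(a:ℂ)*(1-(a:ℂ))*x
       + ((1-(lam:ℂ))*(1-(a:ℂ))+(lam:ℂ)*(a:ℂ)*(1-(a:ℂ)))*y) := by
  simp only [Tfun, Cfun]; field_simp; ring

lemma Sid2' (a lam : ℝ) (x y : ℂ) (hx : x ≠ 0) (hy : y ≠ 0) :
    (Tfun a lam y x + Cfun a lam x y) * x = x -
      ((lam:ℂ)*((1-(a:ℂ))^2+(a:ℂ)^2)*(x*y) + (1-(lam:ℂ))*(a:ℂ)
       + (lam:ℂ)*(a:ℂ)*(1-(a:ℂ))*y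
       + ((1-(lam:ℂ))*(1-(a:ℂ))+(lam:ℂ)*(a:ℂ)*(1-(a:ℂ)))*x) := by
  simp only [Tfun, Cfun]; field_simp; ring

lemma Sid3 (a lam : ℝ) (x y : ℂ) (hx : x ≠ 0) (hy : y ≠ 0) :
    Ffun a lam x y * (x*y) = x*y -
      ((lam:ℂ)/2*((1-(a:ℂ))^2+(a:ℂ)^2)*(x^2*y) + (lam:ℂ)/2*((1-(a:ℂ))^2+(a:ℂ)^2)*(x*y^2)
       + (1-(lam:ℂ))*(1-(a:ℂ))*(a:ℂ)*y + (1-(lam:ℂ))*(1-(a:ℂ))*(a:ℂ)*x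
       + (lam:ℂ)/2*(1-(a:ℂ))*(a:ℂ)*x^2 + (lam:ℂ)/2*(1-(a:ℂ))*(a:ℂ)*y^2
       + ((1-(lam:ℂ))*((1-(a:ℂ))^2+(a:ℂ)^2)+(lam:ℂ)*(a:ℂ)*(1-(a:ℂ)))*(x*y)) := by
  simp only [Ffun]; field_simp; ring

lemma Sid4 (a lam : ℝ) (x y : ℂ) (hx : x ≠ 0) (hy : y ≠ 0) :
    Ffun a lam x y + Cfun a lam x y + Cfun a lam y x = 1 -
      ((lam:ℂ)/2*(1-(a:ℂ))*x + (lam:ℂ)/2*(1-(a:ℂ))*y + ((1-(lam:ℂ)) + (lam:ℂ)*(a:ℂ)))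
      + Lfun a lam x y := by
  simp only [Ffun, Cfun, Lfun]; ring

/-- the functional equation satisfied by the generating functions
of a stationary distribution w of the original chain. -/
theorem stmt17 (a lam : ℝ) (ha : 0 < a) (ha1 : a < 1) (hl : 0 < lam) (hl1 : lam < 1)
    (hρ : rhoLoad a lam < 1)
    (w : ℕ → ℕ → ℝ) (hw : IsStationaryO a lam w) :
    ∀ x y : ℂ, 0 < ‖x‖ → ‖x‖ ≤ 1 →
      0 < ‖y‖ → ‖y‖ ≤ 1 →
      Tfun a lam x y * (∑' p : ℕ × ℕ,
          if p.1 < p.2 then ((w p.1 p.2 : ℝ) : ℂ) * x^p.1 * y^p.2 else 0)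
      + Tfun a lam y x * (∑' p : ℕ × ℕ,
          if p.2 < p.1 then ((w p.1 p.2 : ℝ) : ℂ) * x^p.1 * y^p.2 else 0)
      + Ffun a lam x y * (∑' i : ℕ, ((w i i : ℝ) : ℂ) * (x*y)^i)
      + Cfun a lam x y * (∑' i : ℕ, ((w i 0 : ℝ) : ℂ) * x^i)
      + Cfun a lam y x * (∑' j : ℕ, ((w 0 j : ℝ) : ℂ) * y^j)
      = ((w 0 0 : ℝ) : ℂ) * Lfun a lam x y := by
  classical
  obtain ⟨hwpos, hwsum, hwtot, hstat⟩ := hw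
  intro x y hx0 hx1 hy0 hy1
  have hxne : x ≠ 0 := by intro h; rw [h] at hx0; simp at hx0
  have hyne : y ≠ 0 := by intro h; rw [h] at hy0; simp at hy0
  have hx1' : ‖x‖ ≤ 1 := by exact hx1
  have hy1' : ‖y‖ ≤ 1 := by exact hy1
  have hb : ∀ n m : ℕ, ‖x‖ ^ n * ‖y‖ ^ m ≤ 1 := by
    intro n m
    have h1 : ‖x‖ ^ n ≤ 1 := pow_le_one₀ (norm_nonneg _) hx1'
    have h2 : ‖y‖ ^ m ≤ 1 := pow_le_one₀ (norm_nonneg _) hy1'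
    have h3 : (0:ℝ) ≤ ‖x‖ ^ n := pow_nonneg (norm_nonneg _) _
    have h4 : (0:ℝ) ≤ ‖y‖ ^ m := pow_nonneg (norm_nonneg _) _
    nlinarith
  set f : ℕ × ℕ → ℂ := fun p => ((w p.1 p.2 : ℝ) : ℂ) * x ^ p.1 * y ^ p.2 with hfdef
  have hnormf : ∀ p : ℕ × ℕ, ‖f p‖ ≤ w p.1 p.2 := by
    intro p
    have h1 : ‖f p‖ = |w p.1 p.2| * (‖x‖ ^ p.1 * ‖y‖ ^ p.2) := by
      simp [hfdef, Complex.norm_real, Real.norm_eq_abs, mul_assoc]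
    rw [h1, abs_of_nonneg (hwpos _ _)]
    have := hb p.1 p.2
    nlinarith [hwpos p.1 p.2, mul_nonneg (pow_nonneg (norm_nonneg x) p.1)
      (pow_nonneg (norm_nonneg y) p.2)]
  have hfs : Summable f := Summable.of_norm_bounded hwsum hnormf
  have hPnn : ∀ q p : ℕ × ℕ, 0 ≤ Pker a lam q p :=
    Pker_nonneg a lam ha.le ha1.le hl.le hl1.le
  -- summability of the real double family
  have hg2 : Summable (fun qp : (ℕ×ℕ)×(ℕ×ℕ) => w qp.1.1 qp.1.2 * Pker a lam qp.1 qp.2) := by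
    rw [summable_prod_of_nonneg (fun qp => mul_nonneg (hwpos _ _) (hPnn _ _))]
    dsimp only
    refine ⟨fun q => ((hasSum_rowR a lam q).summable).mul_left _, ?_⟩
    have heq : ∀ q : ℕ × ℕ, (∑' p : ℕ × ℕ, w q.1 q.2 * Pker a lam q p) = w q.1 q.2 := by
      intro q; rw [tsum_mul_left, (hasSum_rowR a lam q).tsum_eq, mul_one]
    simpa only [heq] using hwsum
  set F2 : (ℕ×ℕ)×(ℕ×ℕ) → ℂ := fun qp =>
    ((w qp.1.1 qp.1.2 : ℝ) : ℂ) * (((Pker a lam qp.1 qp.2 : ℝ) : ℂ) * x ^ qp.2.1 * y ^ qp.2.2)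
    with hF2def
  have hF2 : Summable F2 := by
    apply Summable.of_norm_bounded hg2
    intro qp
    have h1 : ‖F2 qp‖ = |w qp.1.1 qp.1.2| * (|Pker a lam qp.1 qp.2| * ‖x‖ ^ qp.2.1 * ‖y‖ ^ qp.2.2) := by
      simp [hF2def, Complex.norm_real, Real.norm_eq_abs]
    rw [h1, abs_of_nonneg (hwpos _ _), abs_of_nonneg (hPnn _ _)]
    have h2 := hb qp.2.1 qp.2.2
    nlinarith [hwpos qp.1.1 qp.1.2, hPnn qp.1 qp.2,
      mul_nonneg (pow_nonneg (norm_nonneg x) qp.2.1) (pow_nonneg (norm_nonneg y) qp.2.2),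
      mul_nonneg (hwpos qp.1.1 qp.1.2) (hPnn qp.1 qp.2)]
  have hfiber : ∀ q : ℕ × ℕ, HasSum (fun p => F2 (q, p))
      (((w q.1 q.2 : ℝ) : ℂ) * Erow a lam x y q) :=
    fun q => (hasSum_rowC a lam x y q).mul_left _
  have hmarg : HasSum (fun q : ℕ × ℕ => ((w q.1 q.2 : ℝ) : ℂ) * Erow a lam x y q)
      (∑' qp : (ℕ×ℕ)×(ℕ×ℕ), F2 qp) := hF2.hasSum.prod_fiberwise hfiber
  have hwE : Summable (fun q : ℕ × ℕ => ((w q.1 q.2 : ℝ) : ℂ) * Erow a lam x y q) :=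
    hmarg.summable
  have hswap : (∑' qp : (ℕ×ℕ)×(ℕ×ℕ), F2 qp) = ∑' p : ℕ × ℕ, f p := by
    have hGs : Summable (fun pq : (ℕ×ℕ)×(ℕ×ℕ) => F2 (pq.2, pq.1)) :=
      (Equiv.prodComm (ℕ×ℕ) (ℕ×ℕ)).summable_iff.mpr hF2
    calc (∑' qp : (ℕ×ℕ)×(ℕ×ℕ), F2 qp)
        = ∑' pq : (ℕ×ℕ)×(ℕ×ℕ), F2 (pq.2, pq.1) := by
          rw [← (Equiv.prodComm (ℕ×ℕ) (ℕ×ℕ)).tsum_eq F2]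
          exact tsum_congr fun pq => rfl
      _ = ∑' p : ℕ×ℕ, ∑' q : ℕ×ℕ, F2 (q, p) :=
          Summable.tsum_prod' hGs fun p => hGs.prod_factor p
      _ = ∑' p : ℕ×ℕ, f p := by
          refine tsum_congr fun p => ?_
          have h3 : ∀ q : ℕ × ℕ, F2 (q, p)
              = ((w q.1 q.2 * Pker a lam q p : ℝ) : ℂ) * (x ^ p.1 * y ^ p.2) := by
            intro q; simp only [hF2def]; push_cast; ring
          rw [tsum_congr h3, tsum_mul_right, ← Complex.ofReal_tsum, ← hstat p]
          simp only [hfdef]; ring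
  have master : (∑' q : ℕ × ℕ, (f q - ((w q.1 q.2 : ℝ) : ℂ) * Erow a lam x y q)) = 0 := by
    rw [Summable.tsum_sub hfs hwE, hmarg.tsum_eq, hswap, sub_self]
  -- region summabilities
  have hA : Summable (fun q : ℕ × ℕ => if q.1 < q.2 then Tfun a lam x y * f q else 0) := by
    have h : (fun q : ℕ × ℕ => if q.1 < q.2 then Tfun a lam x y * f q else 0)
        = fun q => Tfun a lam x y * (if q.1 < q.2 then f q else 0) := by
      funext q; split_ifs <;> simp
    rw [h]; exact (summable_ind hfs _).mul_left _
  have hB : Summable (fun q : ℕ × ℕ => if q.2 < q.1 then Tfun a lam y x * f q else 0) := by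
    have h : (fun q : ℕ × ℕ => if q.2 < q.1 then Tfun a lam y x * f q else 0)
        = fun q => Tfun a lam y x * (if q.2 < q.1 then f q else 0) := by
      funext q; split_ifs <;> simp
    rw [h]; exact (summable_ind hfs _).mul_left _
  have hD : Summable (fun q : ℕ × ℕ => if q.1 = q.2 then Ffun a lam x y * f q else 0) := by
    have h : (fun q : ℕ × ℕ => if q.1 = q.2 then Ffun a lam x y * f q else 0)
        = fun q => Ffun a lam x y * (if q.1 = q.2 then f q else 0) := by
      funext q; split_ifs <;> simp
    rw [h]; exact (summable_ind hfs _).mul_left _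
  have hR : Summable (fun q : ℕ × ℕ => if q.2 = 0 then Cfun a lam x y * f q else 0) := by
    have h : (fun q : ℕ × ℕ => if q.2 = 0 then Cfun a lam x y * f q else 0)
        = fun q => Cfun a lam x y * (if q.2 = 0 then f q else 0) := by
      funext q; split_ifs <;> simp
    rw [h]; exact (summable_ind hfs _).mul_left _
  have hC : Summable (fun q : ℕ × ℕ => if q.1 = 0 then Cfun a lam y x * f q else 0) := by
    have h : (fun q : ℕ × ℕ => if q.1 = 0 then Cfun a lam y x * f q else 0)
        = fun q => Cfun a lam y x * (if q.1 = 0 then f q else 0) := by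
      funext q; split_ifs <;> simp
    rw [h]; exact (summable_ind hfs _).mul_left _
  have hO : Summable (fun q : ℕ × ℕ =>
      if q = ((0,0) : ℕ×ℕ) then ((w 0 0 : ℝ) : ℂ) * Lfun a lam x y else 0) :=
    (hasSum_ite_eq _ _).summable
  -- rewriting the five statement sums
  have e1 : Tfun a lam x y * (∑' p : ℕ × ℕ,
        if p.1 < p.2 then ((w p.1 p.2 : ℝ) : ℂ) * x^p.1 * y^p.2 else 0)
      = ∑' q : ℕ × ℕ, (if q.1 < q.2 then Tfun a lam x y * f q else 0) := by
    rw [← tsum_mul_left]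
    exact tsum_congr fun q => by by_cases h : q.1 < q.2 <;> simp [h, hfdef]
  have e2 : Tfun a lam y x * (∑' p : ℕ × ℕ,
        if p.2 < p.1 then ((w p.1 p.2 : ℝ) : ℂ) * x^p.1 * y^p.2 else 0)
      = ∑' q : ℕ × ℕ, (if q.2 < q.1 then Tfun a lam y x * f q else 0) := by
    rw [← tsum_mul_left]
    exact tsum_congr fun q => by by_cases h : q.2 < q.1 <;> simp [h, hfdef]
  have e3 : Ffun a lam x y * (∑' i : ℕ, ((w i i : ℝ) : ℂ) * (x*y)^i)
      = ∑' q : ℕ × ℕ, (if q.1 = q.2 then Ffun a lam x y * f q else 0) := by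
    have hinj : Function.Injective (fun i : ℕ => ((i, i) : ℕ × ℕ)) :=
      fun n m h => by simpa using congrArg Prod.fst h
    rw [← Function.Injective.tsum_eq hinj
      (f := fun q : ℕ × ℕ => if q.1 = q.2 then Ffun a lam x y * f q else 0) ?_]
    · rw [← tsum_mul_left]
      exact tsum_congr fun i => by dsimp only; rw [if_pos rfl]; simp only [hfdef, mul_pow]; ring
    · intro q hq
      simp only [Function.mem_support, ne_eq, ite_eq_right_iff, not_forall] at hq
      exact ⟨q.1, Prod.ext rfl hq.1⟩
  have e4 : Cfun a lam x y * (∑' i : ℕ, ((w i 0 : ℝ) : ℂ) * x^i)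
      = ∑' q : ℕ × ℕ, (if q.2 = 0 then Cfun a lam x y * f q else 0) := by
    have hinj : Function.Injective (fun i : ℕ => ((i, 0) : ℕ × ℕ)) :=
      fun n m h => by simpa using congrArg Prod.fst h
    rw [← Function.Injective.tsum_eq hinj
      (f := fun q : ℕ × ℕ => if q.2 = 0 then Cfun a lam x y * f q else 0) ?_]
    · rw [← tsum_mul_left]
      exact tsum_congr fun i => by dsimp only; rw [if_pos rfl]; simp only [hfdef]; rw [pow_zero]; ring
    · intro q hq
      simp only [Function.mem_support, ne_eq, ite_eq_right_iff, not_forall] at hq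
      exact ⟨q.1, Prod.ext rfl hq.1.symm⟩
  have e5 : Cfun a lam y x * (∑' j : ℕ, ((w 0 j : ℝ) : ℂ) * y^j)
      = ∑' q : ℕ × ℕ, (if q.1 = 0 then Cfun a lam y x * f q else 0) := by
    have hinj : Function.Injective (fun j : ℕ => (((0 : ℕ), j) : ℕ × ℕ)) :=
      fun n m h => by simpa using congrArg Prod.snd h
    rw [← Function.Injective.tsum_eq hinj
      (f := fun q : ℕ × ℕ => if q.1 = 0 then Cfun a lam y x * f q else 0) ?_]
    · rw [← tsum_mul_left]
      exact tsum_congr fun j => by dsimp only; rw [if_pos rfl]; simp only [hfdef]; rw [pow_zero]; ring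
    · intro q hq
      simp only [Function.mem_support, ne_eq, ite_eq_right_iff, not_forall] at hq
      exact ⟨q.2, Prod.ext hq.1.symm rfl⟩
  -- the key pointwise identity
  have key : ∀ q : ℕ × ℕ,
      (if q.1 < q.2 then Tfun a lam x y * f q else 0)
      + (if q.2 < q.1 then Tfun a lam y x * f q else 0)
      + (if q.1 = q.2 then Ffun a lam x y * f q else 0)
      + (if q.2 = 0 then Cfun a lam x y * f q else 0)
      + (if q.1 = 0 then Cfun a lam y x * f q else 0)
      = (f q - ((w q.1 q.2 : ℝ) : ℂ) * Erow a lam x y q)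
      + (if q = ((0,0) : ℕ×ℕ) then ((w 0 0 : ℝ) : ℂ) * Lfun a lam x y else 0) := by
    rintro ⟨i, j⟩
    dsimp only
    rcases Nat.lt_trichotomy i j with hlt | heq | hgt
    · -- i < j
      obtain ⟨m, rfl⟩ : ∃ m, j = m + 1 := ⟨j - 1, by omega⟩
      rcases Nat.eq_zero_or_pos i with rfl | hi
      · -- q = (0, m+1)
        rw [if_pos hlt, if_neg (by omega : ¬ m + 1 < 0), if_neg (by omega : ¬ (0 : ℕ) = m + 1),
          if_neg (by omega : ¬ m + 1 = 0), if_pos rfl,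
          if_neg (by simp : ¬ ((0 : ℕ), m + 1) = ((0, 0) : ℕ × ℕ))]
        simp only [hfdef, Erow, and_true, true_and, and_false, false_and, if_false, Nat.add_sub_cancel]
        split_ifs <;>
          first
          | omega
          | tauto
          | (push_cast; linear_combination ((w 0 (m+1) : ℝ) : ℂ) * y^m * Sid2 a lam x y hxne hyne)
      · -- q = (k+1, m+1), k+1 < m+1
        obtain ⟨k, rfl⟩ : ∃ k, i = k + 1 := ⟨i - 1, by omega⟩
        rw [if_pos hlt, if_neg (by omega : ¬ m + 1 < k + 1), if_neg (by omega : ¬ k + 1 = m + 1),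
          if_neg (by omega : ¬ m + 1 = 0), if_neg (by omega : ¬ k + 1 = 0),
          if_neg (by simp : ¬ ((k + 1 : ℕ), m + 1) = ((0, 0) : ℕ × ℕ))]
        simp only [hfdef, Erow, and_true, true_and, and_false, false_and, if_false, Nat.add_sub_cancel]
        split_ifs <;>
          first
          | omega
          | tauto
          | (push_cast; linear_combination ((w (k+1) (m+1) : ℝ) : ℂ) * x^k * y^m * Sid1 a lam x y hxne hyne)
    · -- i = j
      subst heq
      rcases Nat.eq_zero_or_pos i with rfl | hi
      · -- q = (0,0)
        rw [if_neg (by omega : ¬ (0:ℕ) < 0), if_neg (by omega : ¬ (0:ℕ) < 0),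
          if_pos rfl, if_pos rfl, if_pos rfl, if_pos rfl]
        simp only [hfdef, Erow, and_true, true_and, and_false, false_and, if_false, Nat.add_sub_cancel]
        split_ifs <;>
          first
          | omega
          | tauto
          | (push_cast; linear_combination ((w 0 0 : ℝ) : ℂ) * Sid4 a lam x y hxne hyne)
      · -- q = (k+1, k+1)
        obtain ⟨k, rfl⟩ : ∃ k, i = k + 1 := ⟨i - 1, by omega⟩
        rw [if_neg (by omega : ¬ k + 1 < k + 1), if_neg (by omega : ¬ k + 1 < k + 1),
          if_pos rfl, if_neg (by omega : ¬ k + 1 = 0), if_neg (by omega : ¬ k + 1 = 0),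
          if_neg (by simp : ¬ ((k + 1 : ℕ), k + 1) = ((0, 0) : ℕ × ℕ))]
        simp only [hfdef, Erow, and_true, true_and, and_false, false_and, if_false, Nat.add_sub_cancel]
        split_ifs <;>
          first
          | omega
          | tauto
          | (push_cast; linear_combination ((w (k+1) (k+1) : ℝ) : ℂ) * x^k * y^k * Sid3 a lam x y hxne hyne)
    · -- j < i
      obtain ⟨k, rfl⟩ : ∃ k, i = k + 1 := ⟨i - 1, by omega⟩
      rcases Nat.eq_zero_or_pos j with rfl | hj
      · -- q = (k+1, 0)
        rw [if_neg (by omega : ¬ k + 1 < 0), if_pos hgt, if_neg (by omega : ¬ k + 1 = 0),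
          if_pos rfl, if_neg (by omega : ¬ k + 1 = 0),
          if_neg (by simp : ¬ ((k + 1 : ℕ), (0:ℕ)) = ((0, 0) : ℕ × ℕ))]
        simp only [hfdef, Erow, and_true, true_and, and_false, false_and, if_false, Nat.add_sub_cancel]
        split_ifs <;>
          first
          | omega
          | tauto
          | (push_cast; linear_combination ((w (k+1) 0 : ℝ) : ℂ) * x^k * Sid2' a lam x y hxne hyne)
      · -- q = (k+1, m+1), m+1 < k+1
        obtain ⟨m, rfl⟩ : ∃ m, j = m + 1 := ⟨j - 1, by omega⟩
        rw [if_neg (by omega : ¬ k + 1 < m + 1), if_pos hgt,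
          if_neg (by omega : ¬ k + 1 = m + 1), if_neg (by omega : ¬ m + 1 = 0),
          if_neg (by omega : ¬ k + 1 = 0),
          if_neg (by simp : ¬ ((k + 1 : ℕ), m + 1) = ((0, 0) : ℕ × ℕ))]
        simp only [hfdef, Erow, and_true, true_and, and_false, false_and, if_false, Nat.add_sub_cancel]
        split_ifs <;>
          first
          | omega
          | tauto
          | (push_cast; linear_combination ((w (k+1) (m+1) : ℝ) : ℂ) * x^k * y^m * Sid1' a lam x y hxne hyne)
  rw [e1, e2, e3, e4, e5, ← Summable.tsum_add hA hB, ← Summable.tsum_add (hA.add hB) hD,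
    ← Summable.tsum_add ((hA.add hB).add hD) hR, ← Summable.tsum_add (((hA.add hB).add hD).add hR) hC,
    tsum_congr key, Summable.tsum_add (hfs.sub hwE) hO, master, zero_add, tsum_ite_eq]
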